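/- Fix reals a ≥ 0 and 0 ≤ α ≤ β. Then lim_{n→∞} sup_{x≥0} |T_{n,a}^{α,β}(t²;x) − x²|/(1+x²) = 0, where T_{n,a}^{α,β}(t²;x) denotes the operator applied to the function t ↦ t². -/

import Mathlib

open MeasureTheory Filter

/-- Rising factorial `(n)_i = n(n+1)⋯(n+i−1)`, with `(n)_0 = 1`. -/
noncomputable def risingFac (n i : ℕ) : ℝ := ∏ j ∈ Finset.range i, ((n : ℝ) + j)

/-- `p_k(n,a) = Σ_{i=0}^{k} C(k,i)·(n)_i·a^{k−i}`. -/
noncomputable def pCoef (n : ℕ) (a : ℝ) (k : ℕ) : ℝ :=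
  ∑ i ∈ Finset.range (k + 1), (Nat.choose k i : ℝ) * risingFac n i * a ^ (k - i)

/-- Generalized Baskakov basis function `W_{n,k}^a(x)`. -/
noncomputable def W (n : ℕ) (a : ℝ) (k : ℕ) (x : ℝ) : ℝ :=
  Real.exp (-(a * x) / (1 + x)) * (pCoef n a k / (Nat.factorial k : ℝ)) * x ^ k /
    (1 + x) ^ (k + n)

/-- Stancu-type operator `L_{n,a}^{α,β}(f;x) = Σ_k W_{n,k}^a(x) f((k+α)/(n+β))`. -/
noncomputable def Lop (n : ℕ) (a α β : ℝ) (f : ℝ → ℝ) (x : ℝ) : ℝ :=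
  ∑' k : ℕ, W n a k x * f (((k : ℝ) + α) / ((n : ℝ) + β))

/-- Generalized Baskakov–Kantorovich–Stancu operator `T_{n,a}^{α,β}(f;x)`. -/
noncomputable def TKS (n : ℕ) (a α β : ℝ) (f : ℝ → ℝ) (x : ℝ) : ℝ :=
  ((n : ℝ) + β) *
    ∑' k : ℕ, W n a k x *
      ∫ t in (((k : ℝ) + α) / ((n : ℝ) + β))..(((k : ℝ) + α + 1) / ((n : ℝ) + β)), f t

lemma risingFac_zero (n : ℕ) : risingFac n 0 = 1 := by simp [risingFac]

lemma risingFac_succ (n i : ℕ) : risingFac n (i+1) = risingFac n i * ((n:ℝ) + i) :=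
  Finset.prod_range_succ _ _

lemma risingFac_nonneg (n i : ℕ) : 0 ≤ risingFac n i :=
  Finset.prod_nonneg fun j _ => by positivity

lemma risingFac_eq_ascFactorial (n i : ℕ) : risingFac n i = (Nat.ascFactorial n i : ℝ) := by
  induction i with
  | zero => simp [risingFac]
  | succ i ih => rw [risingFac_succ, ih, Nat.ascFactorial_succ]; push_cast; ring

lemma risingFac_succ_left (n i : ℕ) : risingFac n (i+1) = (n : ℝ) * risingFac (n+1) i := by
  induction i with
  | zero => simp [risingFac_succ, risingFac_zero]
  | succ i ih =>
      rw [risingFac_succ, ih, risingFac_succ]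
      push_cast; ring

lemma pCoef_nonneg {a : ℝ} (ha : 0 ≤ a) (n k : ℕ) : 0 ≤ pCoef n a k :=
  Finset.sum_nonneg fun i _ => by
    have := risingFac_nonneg n i
    positivity

lemma pCoef_succ (n : ℕ) (a : ℝ) (k : ℕ) :
    pCoef n a (k + 1) = a * pCoef n a k + (n : ℝ) * pCoef (n + 1) a k := by
  have hA : a * pCoef n a k
      = ∑ i ∈ Finset.range (k + 1), (k.choose i : ℝ) * risingFac n i * a ^ (k + 1 - i) := by
    rw [pCoef, Finset.mul_sum]
    refine Finset.sum_congr rfl fun i hi => ?_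
    rw [Finset.mem_range] at hi
    have h : k + 1 - i = (k - i) + 1 := by omega
    rw [h, pow_succ]; ring
  have hB : (n : ℝ) * pCoef (n + 1) a k
      = ∑ i ∈ Finset.range (k + 1), (k.choose i : ℝ) * risingFac n (i + 1) * a ^ (k - i) := by
    rw [pCoef, Finset.mul_sum]
    refine Finset.sum_congr rfl fun i _ => ?_
    rw [risingFac_succ_left]; ring
  rw [hA, hB, pCoef,
    Finset.sum_range_succ'
      (fun i => (((k+1).choose i : ℕ) : ℝ) * risingFac n i * a ^ (k + 1 - i)) (k+1),
    Finset.sum_range_succ'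
      (fun i => ((k.choose i : ℕ) : ℝ) * risingFac n i * a ^ (k + 1 - i)) k]
  have hzero : ((k.choose (k+1) : ℕ) : ℝ) * risingFac n (k+1) * a ^ (k - (k+1)) = 0 := by
    simp [Nat.choose_eq_zero_of_lt (Nat.lt_succ_self k)]
  rw [show (∑ i ∈ Finset.range (k+1), ((k.choose i : ℕ) : ℝ) * risingFac n (i+1) * a ^ (k - i))
      = ∑ i ∈ Finset.range (k+1),
          (((k.choose i : ℕ) : ℝ) * risingFac n (i+1) * a ^ (k - i)) from rfl]
  have hrs : ∀ i ∈ Finset.range (k+1),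
      (((k+1).choose (i+1) : ℕ) : ℝ) * risingFac n (i+1) * a ^ (k + 1 - (i+1))
      = ((k.choose (i+1) : ℕ) : ℝ) * risingFac n (i+1) * a ^ (k + 1 - (i+1))
        + ((k.choose i : ℕ) : ℝ) * risingFac n (i+1) * a ^ (k - i) := by
    intro i hi
    have h1 : (k+1).choose (i+1) = k.choose i + k.choose (i+1) := Nat.choose_succ_succ k i
    have h2 : k + 1 - (i+1) = k - i := by omega
    rw [h1, h2]; push_cast; ring
  rw [Finset.sum_congr rfl hrs, Finset.sum_add_distrib]
  -- now massage ranges: range (k+1) for the choose (i+1) part vs range k + extra zero term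
  rw [Finset.sum_range_succ
      (fun i => ((k.choose (i+1) : ℕ) : ℝ) * risingFac n (i+1) * a ^ (k + 1 - (i+1))) k]
  have h3 : ∀ i ∈ Finset.range k, (k + 1 - (i+1)) = (k - i) := by intro i _; omega
  have h4 : ((k.choose (k+1) : ℕ) : ℝ) * risingFac n (k+1) * a ^ (k + 1 - (k+1)) = 0 := by
    simp [Nat.choose_eq_zero_of_lt (Nat.lt_succ_self k)]
  simp only [h4, add_zero, Nat.choose_zero_right, Nat.cast_one, one_mul, risingFac_zero, mul_one]
  ring

lemma hasSum_risingFac {u : ℝ} (hu0 : 0 ≤ u) (hu1 : u < 1) (n : ℕ) :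
    HasSum (fun i => risingFac n i / (Nat.factorial i : ℝ) * u ^ i) ((1 - u)⁻¹ ^ n) := by
  cases n with
  | zero =>
      simp only [pow_zero]
      have h : (fun i => risingFac 0 i / (Nat.factorial i : ℝ) * u ^ i)
          = fun i => if i = 0 then (1:ℝ) else 0 := by
        funext i
        cases i with
        | zero => simp [risingFac_zero]
        | succ i => rw [risingFac_succ_left]; simp
      rw [h]
      exact hasSum_ite_eq 0 1
  | succ m =>
      have key : ∀ i : ℕ, risingFac (m+1) i / (Nat.factorial i : ℝ) * u ^ i
          = (((i + m).choose m : ℕ) : ℝ) * u ^ i := by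
        intro i
        rw [risingFac_eq_ascFactorial, Nat.ascFactorial_eq_factorial_mul_choose]
        have h1 : (m + i).choose i = (i + m).choose m := by
          have := Nat.choose_symm (Nat.le_add_left m i)
          simpa [Nat.add_sub_cancel, Nat.add_comm] using this
        rw [Nat.cast_mul, h1]
        field_simp
      have hr : ‖u‖ < 1 := by rwa [Real.norm_eq_abs, abs_of_nonneg hu0]
      have h := hasSum_choose_mul_geometric_of_norm_lt_one (𝕜 := ℝ) m hr
      have h2 : (1:ℝ) / (1 - u) ^ (m + 1) = (1 - u)⁻¹ ^ (m + 1) := by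
        rw [one_div, inv_pow]
      rw [h2] at h
      simpa only [key] using h

variable {a u : ℝ} 

/-- `F_m = e^{au} (1-u)^{-m}`, value of the generating series. -/
noncomputable def Fser (a u : ℝ) (m : ℕ) : ℝ := Real.exp (a * u) * ((1 - u)⁻¹) ^ m

lemma hasSum_exp_series (a u : ℝ) :
    HasSum (fun j => (a * u) ^ j / (Nat.factorial j : ℝ)) (Real.exp (a * u)) := by
  rw [Real.exp_eq_exp_ℝ]
  exact NormedSpace.expSeries_div_hasSum_exp (a * u)

lemma hasSum_pCoef (ha : 0 ≤ a) (hu0 : 0 ≤ u) (hu1 : u < 1) (n : ℕ) :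
    HasSum (fun k => pCoef n a k / (Nat.factorial k : ℝ) * u ^ k) (Fser a u n) := by
  have hB := hasSum_risingFac hu0 hu1 n
  have hE := hasSum_exp_series a u
  have hBn : Summable fun i => ‖risingFac n i / (Nat.factorial i : ℝ) * u ^ i‖ := by
    simpa only [Real.norm_eq_abs] using hB.summable.abs
  have hEn : Summable fun j => ‖(a * u) ^ j / (Nat.factorial j : ℝ)‖ := by
    simpa only [Real.norm_eq_abs] using hE.summable.abs
  have h := hasSum_sum_range_mul_of_summable_norm hBn hEn
  rw [hB.tsum_eq, hE.tsum_eq] at h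
  have hfun : ∀ k, (∑ i ∈ Finset.range (k+1),
        risingFac n i / (Nat.factorial i : ℝ) * u ^ i
          * ((a * u) ^ (k - i) / (Nat.factorial (k - i) : ℝ)))
      = pCoef n a k / (Nat.factorial k : ℝ) * u ^ k := by
    intro k
    rw [pCoef, Finset.sum_div, Finset.sum_mul]
    refine Finset.sum_congr rfl fun i hi => ?_
    have hik : i ≤ k := Nat.lt_succ_iff.mp (Finset.mem_range.mp hi)
    have hc : ((k.choose i : ℕ) : ℝ) * (Nat.factorial i : ℝ) * (Nat.factorial (k - i) : ℝ)
        = (Nat.factorial k : ℝ) := by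
      exact_mod_cast congrArg Nat.cast (Nat.choose_mul_factorial_mul_factorial hik)
    have hsplit : u ^ k = u ^ i * u ^ (k - i) := by
      rw [← pow_add, Nat.add_sub_cancel' hik]
    have hi0 : (Nat.factorial i : ℝ) ≠ 0 := Nat.cast_ne_zero.mpr (Nat.factorial_ne_zero i)
    have hki0 : (Nat.factorial (k - i) : ℝ) ≠ 0 := Nat.cast_ne_zero.mpr (Nat.factorial_ne_zero _)
    have hk0 : (Nat.factorial k : ℝ) ≠ 0 := Nat.cast_ne_zero.mpr (Nat.factorial_ne_zero k)
    have hch0 : ((k.choose i : ℕ) : ℝ) ≠ 0 :=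
      Nat.cast_ne_zero.mpr (Nat.choose_pos hik).ne'
    rw [mul_pow, hsplit, ← hc]
    field_simp
  have h2 : (fun k => ∑ i ∈ Finset.range (k+1),
        risingFac n i / (Nat.factorial i : ℝ) * u ^ i
          * ((a * u) ^ (k - i) / (Nat.factorial (k - i) : ℝ)))
      = fun k => pCoef n a k / (Nat.factorial k : ℝ) * u ^ k := funext hfun
  rw [h2] at h
  rw [Fser]
  convert! h using 1
  ring
lemma shift_term (n k : ℕ) (hu : True) :
    ((k:ℝ)+1) * (pCoef n a (k+1) / (Nat.factorial (k+1) : ℝ) * u ^ (k+1))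
      = u * a * (pCoef n a k / (Nat.factorial k : ℝ) * u ^ k)
        + u * (n:ℝ) * (pCoef (n+1) a k / (Nat.factorial k : ℝ) * u ^ k) := by
  have hk1 : ((k:ℝ)+1) ≠ 0 := by positivity
  have hf : (Nat.factorial (k+1) : ℝ) = ((k:ℝ)+1) * (Nat.factorial k : ℝ) := by
    rw [Nat.factorial_succ]; push_cast; ring
  have hk0 : (Nat.factorial k : ℝ) ≠ 0 := Nat.cast_ne_zero.mpr (Nat.factorial_ne_zero k)
  rw [pCoef_succ, hf, pow_succ]
  field_simp

lemma hasSum_pCoef_mul (ha : 0 ≤ a) (hu0 : 0 ≤ u) (hu1 : u < 1) (n : ℕ) :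
    HasSum (fun k : ℕ => (k:ℝ) * (pCoef n a k / (Nat.factorial k : ℝ) * u ^ k))
      (u * a * Fser a u n + u * (n:ℝ) * Fser a u (n+1)) := by
  have h1 := (hasSum_pCoef ha hu0 hu1 n).mul_left (u * a)
  have h2 := (hasSum_pCoef ha hu0 hu1 (n+1)).mul_left (u * (n:ℝ))
  have hshift := h1.add h2
  rw [← hasSum_nat_add_iff' 1]
  simp only [Finset.sum_range_one, Nat.cast_zero, zero_mul, sub_zero]
  convert! hshift using 2 with k
  push_cast
  exact shift_term n k trivial

lemma hasSum_pCoef_mul_sq (ha : 0 ≤ a) (hu0 : 0 ≤ u) (hu1 : u < 1) (n : ℕ) :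
    HasSum (fun k : ℕ => (k:ℝ)^2 * (pCoef n a k / (Nat.factorial k : ℝ) * u ^ k))
      (u * a * (u * a * Fser a u n + u * (n:ℝ) * Fser a u (n+1))
        + u * (n:ℝ) * (u * a * Fser a u (n+1) + u * ((n:ℝ)+1) * Fser a u (n+2))
        + u * a * Fser a u n + u * (n:ℝ) * Fser a u (n+1)) := by
  have h1 := (hasSum_pCoef_mul ha hu0 hu1 n).mul_left (u * a)
  have h2 := (hasSum_pCoef_mul ha hu0 hu1 (n+1)).mul_left (u * (n:ℝ))
  have h3 := (hasSum_pCoef ha hu0 hu1 n).mul_left (u * a)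
  have h4 := (hasSum_pCoef ha hu0 hu1 (n+1)).mul_left (u * (n:ℝ))
  have hshift := ((h1.add h2).add h3).add h4
  rw [← hasSum_nat_add_iff' 1]
  simp only [Finset.sum_range_one, Nat.cast_zero, zero_mul, sub_zero, ne_eq, zero_pow,
    OfNat.ofNat_ne_zero, not_false_eq_true]
  convert! hshift using 1
  · funext k
    push_cast
    have hst := shift_term (a := a) (u := u) n k trivial
    have : ((k:ℝ)+1)^2 * (pCoef n a (k+1) / (Nat.factorial (k+1) : ℝ) * u ^ (k+1))
        = ((k:ℝ)+1) * (((k:ℝ)+1) * (pCoef n a (k+1) / (Nat.factorial (k+1) : ℝ) * u ^ (k+1))) := by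
      ring
    rw [this, hst]
    ring_nf
  · push_cast; ring

/-- the constant in the uniform bound -/
noncomputable def Cbd (a α β : ℝ) : ℝ :=
  a^2 + 2*a + (2*α+2)*a + 2*α + 2 + α^2 + α + 1 + 1 + 2*β + β^2

lemma Cbd_pos {a α β : ℝ} (ha : 0 ≤ a) (hα : 0 ≤ α) (hβ : 0 ≤ β) : 0 < Cbd a α β := by
  unfold Cbd; positivity


set_option maxHeartbeats 1000000 in
lemma num_bound {a α β N u x : ℝ} (ha : 0 ≤ a) (hα : 0 ≤ α) (hβ : 0 ≤ β)
    (hN : 1 ≤ N) (hx : 0 ≤ x) (hu0 : 0 ≤ u) (hule : u ≤ 1) (huxle : u ≤ x) :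
    |(a^2*u^2 + 2*a*N*u*x + N*(N+1)*x^2 + a*u + N*x)
      + (2*α+1) * (u * a + N * x) + (α^2+α+1/3) * 1 - (N + β)^2 * x^2|
      ≤ Cbd a α β * (N + 1) * (1 + x^2) := by
  have hxq : x ≤ 1 + x ^ 2 := by nlinarith [sq_nonneg (x - 1)]
  have hP : (0:ℝ) ≤ (N+1)*(1+x^2) := by positivity
  have h1 : 1 ≤ (N+1)*(1+x^2) := by nlinarith [sq_nonneg x]
  have hq2 : x^2 ≤ (N+1)*(1+x^2) := by nlinarith [sq_nonneg x]
  have hu2 : u^2 ≤ 1 := by nlinarith [mul_le_mul_of_nonneg_left hule hu0]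
  have hb1 : a^2*u^2 ≤ a^2 := by linarith [mul_le_mul_of_nonneg_left hu2 (sq_nonneg a)]
  have hb2 : 2*a*N*u*x ≤ 2*a*N*(1+x^2) := by
    have h' : u*x ≤ 1+x^2 := by nlinarith [mul_le_mul_of_nonneg_right huxle hx, sq_nonneg x]
    have h'' : (0:ℝ) ≤ 2*a*N := by positivity
    linarith [mul_le_mul_of_nonneg_left h' h'']
  have hb3 : N*x^2 ≤ N*(1+x^2) := by nlinarith [(by linarith : (0:ℝ) ≤ N)]
  have hb4 : (2*α+2)*a*u ≤ (2*α+2)*a := by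
    have h'' : (0:ℝ) ≤ (2*α+2)*a := by positivity
    linarith [mul_le_mul_of_nonneg_left hule h'']
  have hb5 : (2*α+2)*N*x ≤ (2*α+2)*N*(1+x^2) := by
    have h'' : (0:ℝ) ≤ (2*α+2)*N := by positivity
    linarith [mul_le_mul_of_nonneg_left hxq h'']
  have hAnn : (0:ℝ) ≤ a^2 + (2*α+2)*a + (α^2+α+1) := by positivity
  have hAmul := mul_le_mul_of_nonneg_left h1 hAnn
  have hBle : N*(1+x^2) ≤ (N+1)*(1+x^2) := by nlinarith [sq_nonneg x]
  have hBnn : (0:ℝ) ≤ 2*a + 1 + (2*α+2) := by positivity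
  have hBmul := mul_le_mul_of_nonneg_left hBle hBnn
  have hCx : (0:ℝ) ≤ (2*β+β^2)*((N+1)*(1+x^2)) := by positivity
  have hn1 : (0:ℝ) ≤ 2*β*N*x^2 := by positivity
  have hn2 : (0:ℝ) ≤ β^2*x^2 := by positivity
  have hd1 : 2*β*N*x^2 ≤ 2*β*((N+1)*(1+x^2)) := by
    have h2 : N*x^2 ≤ (N+1)*(1+x^2) := le_trans hb3 hBle
    have h'' : (0:ℝ) ≤ 2*β := by positivity
    linarith [mul_le_mul_of_nonneg_left h2 h'']
  have hd2 : β^2*x^2 ≤ β^2*((N+1)*(1+x^2)) := by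
    linarith [mul_le_mul_of_nonneg_left hq2 (sq_nonneg β)]
  have hpos : 0 ≤ a^2*u^2 + 2*a*N*u*x + N*x^2 + (2*α+2)*a*u + (2*α+2)*N*x
      + (α^2+α+1/3) := by positivity
  rw [abs_le, Cbd]
  constructor
  · linarith [hpos, hd1, hd2, hCx]
  · linarith [hb1, hb2, hb3, hb4, hb5, hAmul, hBmul, hn1, hn2, hCx]

set_option maxHeartbeats 1000000 in
lemma pointwise_bound {a α β : ℝ} (ha : 0 ≤ a) (hα : 0 ≤ α) (hβ : 0 ≤ β)
    (n : ℕ) (hn : 1 ≤ n) (x : ℝ) (hx : 0 ≤ x) :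
    |TKS n a α β (fun t => t ^ 2) x - x ^ 2| / (1 + x ^ 2)
      ≤ Cbd a α β * ((n:ℝ) + 1) / ((n:ℝ) + β) ^ 2 := by
  have hN : (1:ℝ) ≤ (n:ℝ) := by exact_mod_cast hn
  set N := (n:ℝ) with hNdef
  have hx1 : (0:ℝ) < 1 + x := by linarith
  set u := x / (1 + x) with hu
  have hu0 : 0 ≤ u := div_nonneg hx hx1.le
  have hu1 : u < 1 := (div_lt_one hx1).mpr (by linarith)
  have hux : u * (1 + x) = x := by rw [hu]; field_simp
  have huxle : u ≤ x := by
    rw [hu]; exact div_le_self hx (by linarith)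
  have hule : u ≤ 1 := hu1.le
  have h1u : (1 - u)⁻¹ = 1 + x := by
    rw [hu]; rw [show 1 - x / (1+x) = 1/(1+x) by field_simp; ring]; simp
  set c := Real.exp (-(a * x) / (1 + x)) * ((1 + x)⁻¹) ^ n with hc
  have hcF : ∀ m : ℕ, c * Fser a u (n + m) = (1 + x) ^ m := by
    intro m
    have hexp : Real.exp (-(a * x) / (1 + x)) * Real.exp (a * u) = 1 := by
      rw [← Real.exp_add, hu]
      rw [show -(a * x) / (1 + x) + a * (x / (1 + x)) = 0 by field_simp; ring]
      exact Real.exp_zero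
    rw [hc, Fser, h1u]
    rw [show Real.exp (-(a * x) / (1 + x)) * (1 + x)⁻¹ ^ n * (Real.exp (a * u) * (1 + x) ^ (n + m))
        = (Real.exp (-(a * x) / (1 + x)) * Real.exp (a * u)) * ((1 + x)⁻¹ ^ n * (1 + x) ^ (n + m))
        by ring, hexp, one_mul, pow_add]
    rw [inv_pow]
    field_simp
  have hWc : ∀ k : ℕ, W n a k x = c * (pCoef n a k / (Nat.factorial k : ℝ) * u ^ k) := by
    intro k
    rw [W, hc, hu, div_pow, pow_add]
    have h2 : ((1:ℝ) + x) ^ k ≠ 0 := pow_ne_zero _ hx1.ne'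
    have h3 : ((1:ℝ) + x) ^ n ≠ 0 := pow_ne_zero _ hx1.ne'
    field_simp
    ring_nf; rw [inv_pow]; field_simp
  have hc0 : c ≠ 0 := by
    rw [hc]
    positivity
  have hF0 : Fser a u n = 1 / c := by
    have := hcF 0
    rw [Nat.add_zero, pow_zero] at this
    field_simp [hc0] at this ⊢
    linarith [this]
  have hF1 : Fser a u (n+1) = (1 + x) / c := by
    have := hcF 1
    rw [pow_one] at this
    field_simp [hc0] at this ⊢
    linarith [this]
  have hF2 : Fser a u (n+2) = (1 + x)^2 / c := by
    have := hcF 2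
    field_simp [hc0] at this ⊢
    linarith [this]
  -- the three basic sums at the W level
  have hS0 : HasSum (fun k : ℕ => W n a k x) 1 := by
    have h := (hasSum_pCoef ha hu0 hu1 n).mul_left c
    rw [hF0] at h
    rw [mul_one_div, div_self hc0] at h
    have he : (fun k : ℕ => c * (pCoef n a k / (Nat.factorial k : ℝ) * u ^ k))
        = fun k : ℕ => W n a k x := funext fun k => (hWc k).symm
    rwa [he] at h
  have hS1 : HasSum (fun k : ℕ => (k:ℝ) * W n a k x) (u * a + N * x) := by
    have h := (hasSum_pCoef_mul ha hu0 hu1 n).mul_left c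
    have he : (fun k : ℕ => c * ((k:ℝ) * (pCoef n a k / (Nat.factorial k : ℝ) * u ^ k)))
        = fun k : ℕ => (k:ℝ) * W n a k x := funext fun k => by rw [hWc k]; ring
    rw [he] at h
    have hv : c * (u * a * Fser a u n + u * N * Fser a u (n+1)) = u * a + N * x := by
      rw [hF0, hF1, hu]
      field_simp
    rwa [hv] at h
  have hS2 : HasSum (fun k : ℕ => (k:ℝ)^2 * W n a k x)
      (a^2*u^2 + 2*a*N*u*x + N*(N+1)*x^2 + a*u + N*x) := by
    have h := (hasSum_pCoef_mul_sq ha hu0 hu1 n).mul_left c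
    have he : (fun k : ℕ => c * ((k:ℝ)^2 * (pCoef n a k / (Nat.factorial k : ℝ) * u ^ k)))
        = fun k : ℕ => (k:ℝ)^2 * W n a k x := funext fun k => by rw [hWc k]; ring
    rw [he] at h
    have hv : c * (u * a * (u * a * Fser a u n + u * N * Fser a u (n+1))
        + u * N * (u * a * Fser a u (n+1) + u * (N+1) * Fser a u (n+2))
        + u * a * Fser a u n + u * N * Fser a u (n+1))
        = a^2*u^2 + 2*a*N*u*x + N*(N+1)*x^2 + a*u + N*x := by
      rw [hF0, hF1, hF2, hu]
      field_simp
      ring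
    rwa [hv] at h
  -- combined sum giving the operator value
  set V : ℝ := (a^2*u^2 + 2*a*N*u*x + N*(N+1)*x^2 + a*u + N*x)
      + (2*α+1) * (u * a + N * x) + (α^2+α+1/3) * 1 with hV
  have hT : HasSum (fun k : ℕ => W n a k x * (((k:ℝ)+α)^2 + ((k:ℝ)+α) + 1/3)) V := by
    have h := (hS2.add (hS1.mul_left (2*α+1))).add (hS0.mul_left (α^2+α+1/3))
    have he : (fun k : ℕ => (k:ℝ)^2 * W n a k x + (2*α+1) * ((k:ℝ) * W n a k x)
          + (α^2+α+1/3) * W n a k x)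
        = fun k : ℕ => W n a k x * (((k:ℝ)+α)^2 + ((k:ℝ)+α) + 1/3) := by
      funext k; ring
    rw [he] at h
    exact h
  have hnb : (0:ℝ) < N + β := by linarith
  have hI : ∀ k : ℕ, (∫ t in (((k:ℝ) + α) / (N + β))..(((k:ℝ) + α + 1) / (N + β)), t ^ 2)
      = (((k:ℝ)+α)^2 + ((k:ℝ)+α) + 1/3) / (N + β) ^ 3 := by
    intro k
    rw [integral_pow]
    push_cast
    field_simp
    ring
  have hTKS : TKS n a α β (fun t => t ^ 2) x = V / (N + β) ^ 2 := by
    rw [TKS]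
    have he : (fun k : ℕ => W n a k x *
          ∫ t in (((k:ℝ) + α) / ((n:ℝ) + β))..(((k:ℝ) + α + 1) / ((n:ℝ) + β)), t ^ 2)
        = fun k : ℕ => (W n a k x * (((k:ℝ)+α)^2 + ((k:ℝ)+α) + 1/3)) / (N + β) ^ 3 := by
      funext k
      rw [← hNdef, hI k]
      ring
    rw [he, (hT.div_const ((N + β) ^ 3)).tsum_eq, ← hNdef]
    field_simp
  -- the numerator bound
  have hxq : x ≤ 1 + x ^ 2 := by nlinarith [sq_nonneg (x - 1)]
  have hnum : |V - (N + β)^2 * x^2| ≤ Cbd a α β * (N + 1) * (1 + x^2) := by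
    rw [hV]
    exact num_bound ha hα hβ hN hx hu0 hule huxle
  have hq : (0:ℝ) < 1 + x ^ 2 := by positivity
  rw [hTKS]
  have hdiff : V / (N + β)^2 - x^2 = (V - (N + β)^2 * x^2) / (N + β)^2 := by
    field_simp
  rw [hdiff, abs_div, abs_of_pos (by positivity : (0:ℝ) < (N + β)^2)]
  rw [div_div]
  rw [div_le_div_iff₀ (by positivity) (by positivity)]
  calc |V - (N + β)^2 * x^2| * (N + β)^2
      ≤ (Cbd a α β * (N + 1) * (1 + x^2)) * (N + β)^2 := by
        apply mul_le_mul_of_nonneg_right hnum (by positivity)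
    _ = Cbd a α β * (N + 1) * ((N + β)^2 * (1 + x^2)) := by ring

theorem Top_weighted_convergence_sq (a : ℝ) (ha : 0 ≤ a) (α β : ℝ) (hα : 0 ≤ α)
    (hαβ : α ≤ β) :
    Tendsto (fun n : ℕ =>
        ⨆ x : {x : ℝ // 0 ≤ x},
          |TKS n a α β (fun t => t ^ 2) x.val - x.val ^ 2| / (1 + x.val ^ 2))
      atTop (nhds 0) := by
  have hβ : 0 ≤ β := le_trans hα hαβ
  haveI : Nonempty {x : ℝ // 0 ≤ x} := ⟨⟨0, le_rfl⟩⟩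
  have hC := (Cbd_pos ha hα hβ).le
  refine tendsto_of_tendsto_of_tendsto_of_le_of_le' tendsto_const_nhds
    (tendsto_const_div_atTop_nhds_zero_nat (2 * Cbd a α β)) ?_ ?_
  · filter_upwards with n
    exact Real.iSup_nonneg fun x => by positivity
  · filter_upwards [eventually_ge_atTop 1] with n hn
    apply ciSup_le
    intro x
    refine le_trans (pointwise_bound ha hα hβ n hn x.1 x.2) ?_
    have hN : (1:ℝ) ≤ (n:ℝ) := by exact_mod_cast hn
    rw [div_le_div_iff₀ (by positivity) (by linarith)]
    have h1 : (n:ℝ) ≤ (n:ℝ)^2 := by nlinarith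
    nlinarith [mul_le_mul_of_nonneg_left h1 hC,
      mul_nonneg (mul_nonneg hC hβ) (by linarith : (0:ℝ) ≤ (n:ℝ)),
      mul_nonneg hC (mul_nonneg hβ hβ)]
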